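/- Up to sign of the determinant, the integer pairs (a,b) for which all complex roots of p(λ) = -λ³ + aλ² + bλ + 2 have modulus strictly greater than 1 are exactly the seven pairs (0,0), (-1,1), (1,-1), (0,1), (2,-2), (1,0), (0,2). -/

import Mathlib

open Polynomial

private lemma tri (A B C : ℝ) (hA : 1<A) (hB : 1<B) (hC : 1<C) (h : A*B*C = 2) : A < 2 := by
  nlinarith [mul_pos (sub_pos.2 hB) (sub_pos.2 hC)]

private lemma absroots (a b : ℤ)
    (h : ∀ z : ℂ, -z ^ 3 + (a : ℂ) * z ^ 2 + (b : ℂ) * z + 2 = 0 → 1 < ‖z‖) :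
    ∀ z : ℂ, -z ^ 3 + (a : ℂ) * z ^ 2 + (b : ℂ) * z + 2 = 0 → ‖z‖ < 2 := by
  set Q : ℂ[X] := X^3 - C (a:ℂ) * X^2 - C (b:ℂ) * X - C 2 with hQ
  have hev : ∀ z : ℂ, Q.eval z = z^3 - a*z^2 - b*z - 2 := by intro z; simp [hQ]
  have hmo : Q.Monic := by unfold Q; monicity!
  have hdeg : Q.natDegree = 3 := by unfold Q; compute_degree!
  have hsplit : Q.Splits := IsAlgClosed.splits Q
  have hcard : Multiset.card Q.roots = 3 := by
    have := (Splits.natDegree_eq_card_roots hsplit).symm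
    rwa [hdeg] at this
  have hprod := Splits.coeff_zero_eq_prod_roots_of_monic hsplit hmo
  obtain ⟨z1, z2, z3, hzs⟩ := Multiset.card_eq_three.mp hcard
  have hC : Q.coeff 0 = -2 := by unfold Q; simp
  have hprod2 : z1 * z2 * z3 = 2 := by
    rw [hzs] at hprod
    simp [hC, hdeg] at hprod
    linear_combination hprod
  have habs : ∀ w ∈ Q.roots, 1 < ‖w‖ := by
    intro w hw
    have hwr : Q.eval w = 0 := (mem_roots hmo.ne_zero).mp hw
    rw [hev] at hwr
    apply h
    linear_combination -hwr
  have h1 := habs z1 (by rw [hzs]; simp)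
  have h2 := habs z2 (by rw [hzs]; simp)
  have h3 := habs z3 (by rw [hzs]; simp)
  have hpa : ‖z1‖ * ‖z2‖ * ‖z3‖ = 2 := by
    rw [← norm_mul, ← norm_mul, hprod2]; simp
  intro z hz
  have hzr : Q.eval z = 0 := by rw [hev]; linear_combination -hz
  have hzm : z ∈ Q.roots := (mem_roots hmo.ne_zero).mpr hzr
  rw [hzs] at hzm
  simp [Multiset.mem_cons, Multiset.mem_singleton] at hzm
  rcases hzm with rfl | rfl | rfl
  · exact tri _ _ _ h1 h2 h3 hpa
  · exact tri _ _ _ h2 h1 h3 (by linear_combination hpa)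
  · exact tri _ _ _ h3 h1 h2 (by linear_combination hpa)

private lemma ivt_root (a b x1 x2 : ℝ) (hle : x1 ≤ x2)
    (h1 : x1^3 - a*x1^2 - b*x1 - 2 ≤ 0) (h2 : 0 ≤ x2^3 - a*x2^2 - b*x2 - 2) :
    ∃ x, x1 ≤ x ∧ x ≤ x2 ∧ x^3 - a*x^2 - b*x - 2 = 0 := by
  have hc : ContinuousOn (fun x : ℝ => x^3 - a*x^2 - b*x - 2) (Set.Icc x1 x2) := by fun_prop
  have := intermediate_value_Icc hle hc
  have h0 : (0:ℝ) ∈ Set.Icc (x1^3 - a*x1^2 - b*x1 - 2) (x2^3 - a*x2^2 - b*x2 - 2) :=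
    Set.mem_Icc.mpr ⟨h1, h2⟩
  obtain ⟨x, hx, hfx⟩ := this h0
  exact ⟨x, hx.1, hx.2, hfx⟩

-- real root x of x³-ax²-bx-2 gives complex root of -z³+az²+bz+2
private lemma realroot_complex (a b : ℤ) (x : ℝ) (hx : x^3 - (a:ℝ)*x^2 - (b:ℝ)*x - 2 = 0) :
    -(x:ℂ) ^ 3 + (a : ℂ) * (x:ℂ) ^ 2 + (b : ℂ) * (x:ℂ) + 2 = 0 := by
  have : -(x:ℂ)^3 + (a:ℂ)*(x:ℂ)^2 + (b:ℂ)*(x:ℂ) + 2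
      = ((-(x^3 - (a:ℝ)*x^2 - (b:ℝ)*x - 2) : ℝ) : ℂ) := by push_cast; ring
  rw [this, hx]; simp

private lemma ivt_root' (a b x1 x2 : ℝ) (hle : x1 ≤ x2)
    (h1 : 0 ≤ x1^3 - a*x1^2 - b*x1 - 2) (h2 : x2^3 - a*x2^2 - b*x2 - 2 ≤ 0) :
    ∃ x, x1 ≤ x ∧ x ≤ x2 ∧ x^3 - a*x^2 - b*x - 2 = 0 := by
  have hc : ContinuousOn (fun x : ℝ => x^3 - a*x^2 - b*x - 2) (Set.Icc x1 x2) := by fun_prop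
  have := intermediate_value_Icc' hle hc
  have h0 : (0:ℝ) ∈ Set.Icc (x2^3 - a*x2^2 - b*x2 - 2) (x1^3 - a*x1^2 - b*x1 - 2) :=
    Set.mem_Icc.mpr ⟨h2, h1⟩
  obtain ⟨x, hx, hfx⟩ := this h0
  exact ⟨x, hx.1, hx.2, hfx⟩

private lemma bigM_pos (a b : ℝ) :
    0 < (|a| + |b| + 3)^3 - a*(|a| + |b| + 3)^2 - b*(|a| + |b| + 3) - 2 := by
  set A := |a|; set B := |b|; set M := A + B + 3 with hM
  have F1 : A - a ≥ 0 := by simp only [A]; linarith [le_abs_self a]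
  have F3 : B - b ≥ 0 := by simp only [B]; linarith [le_abs_self b]
  have hA0 : 0 ≤ A := abs_nonneg a
  have hB0 : 0 ≤ B := abs_nonneg b
  have hM3 : 3 ≤ M := by simp only [hM]; linarith
  nlinarith [mul_nonneg (mul_nonneg F1 (by linarith : (0:ℝ) ≤ M)) (by linarith : (0:ℝ) ≤ M),
    mul_nonneg F3 (by linarith : (0:ℝ) ≤ M),
    mul_nonneg hB0 (by nlinarith : (0:ℝ) ≤ M^2 - M), sq_nonneg M]

private lemma bigM_neg (a b : ℝ) :
    (-(|a| + |b| + 3))^3 - a*(-(|a| + |b| + 3))^2 - b*(-(|a| + |b| + 3)) - 2 < 0 := by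
  set A := |a|; set B := |b|; set M := A + B + 3 with hM
  have F2 : A + a ≥ 0 := by simp only [A]; linarith [neg_abs_le a]
  have F3 : B - b ≥ 0 := by simp only [B]; linarith [le_abs_self b]
  have F4 : B + b ≥ 0 := by simp only [B]; linarith [neg_abs_le b]
  have hA0 : 0 ≤ A := abs_nonneg a
  have hB0 : 0 ≤ B := abs_nonneg b
  have hM3 : 3 ≤ M := by simp only [hM]; linarith
  nlinarith [mul_nonneg (mul_nonneg F2 (by linarith : (0:ℝ) ≤ M)) (by linarith : (0:ℝ) ≤ M),
    mul_nonneg F4 (by linarith : (0:ℝ) ≤ M),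
    mul_nonneg hB0 (by nlinarith : (0:ℝ) ≤ M^2 - M), sq_nonneg M]

private lemma forward (a b : ℤ)
    (h : ∀ z : ℂ, -z ^ 3 + (a : ℂ) * z ^ 2 + (b : ℂ) * z + 2 = 0 → 1 < ‖z‖) :
    0 ≤ a + b ∧ b ≤ a + 2 ∧ 2*a + b ≤ 2 ∧ b ≤ 2*a + 4 := by
  have habs2 := absroots a b h
  have key : ∀ x : ℝ, x^3 - (a:ℝ)*x^2 - (b:ℝ)*x - 2 = 0 → 1 < |x| ∧ |x| < 2 := by
    intro x hx
    have h1 := h _ (realroot_complex a b x hx)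
    have h2 := habs2 _ (realroot_complex a b x hx)
    rw [Complex.norm_real, Real.norm_eq_abs] at h1 h2
    exact ⟨h1, h2⟩
  refine ⟨?_, ?_, ?_, ?_⟩
  · -- 0 ≤ a + b, else root in [0,1]
    by_contra hc
    have hab : a + b ≤ -1 := by omega
    have habR : (a:ℝ) + (b:ℝ) ≤ -1 := by exact_mod_cast hab
    obtain ⟨x, hx0, hx1, hx⟩ := ivt_root (a:ℝ) (b:ℝ) 0 1 (by norm_num)
      (by norm_num) (by nlinarith)
    have := (key x hx).1
    rw [abs_of_nonneg hx0] at this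
    linarith
  · -- b ≤ a + 2, else root in [-1,0]
    by_contra hc
    have hab : a + 3 ≤ b := by omega
    have habR : (a:ℝ) + 3 ≤ (b:ℝ) := by exact_mod_cast hab
    obtain ⟨x, hx0, hx1, hx⟩ := ivt_root' (a:ℝ) (b:ℝ) (-1) 0 (by norm_num)
      (by nlinarith) (by norm_num)
    have := (key x hx).1
    rw [abs_of_nonpos hx1] at this
    linarith
  · -- 2a + b ≤ 2, else root in [2, M]
    by_contra hc
    have hab : 3 ≤ 2*a + b := by omega
    have habR : (3:ℝ) ≤ 2*(a:ℝ) + (b:ℝ) := by exact_mod_cast hab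
    obtain ⟨x, hx0, hx1, hx⟩ := ivt_root (a:ℝ) (b:ℝ) 2 (|(a:ℝ)| + |(b:ℝ)| + 3)
      (by linarith [le_abs_self (a:ℝ), neg_abs_le (a:ℝ), le_abs_self (b:ℝ), neg_abs_le (b:ℝ),
        abs_nonneg (a:ℝ), abs_nonneg (b:ℝ)])
      (by nlinarith) (le_of_lt (bigM_pos (a:ℝ) (b:ℝ)))
    have := (key x hx).2
    rw [abs_of_nonneg (by linarith)] at this
    linarith
  · -- b ≤ 2a + 4, else root in [-M, -2]
    by_contra hc
    have hab : 2*a + 5 ≤ b := by omega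
    have habR : 2*(a:ℝ) + 5 ≤ (b:ℝ) := by exact_mod_cast hab
    obtain ⟨x, hx0, hx1, hx⟩ := ivt_root (a:ℝ) (b:ℝ) (-(|(a:ℝ)| + |(b:ℝ)| + 3)) (-2)
      (by linarith [le_abs_self (a:ℝ), neg_abs_le (a:ℝ), le_abs_self (b:ℝ), neg_abs_le (b:ℝ),
        abs_nonneg (a:ℝ), abs_nonneg (b:ℝ)])
      (le_of_lt (bigM_neg (a:ℝ) (b:ℝ))) (by nlinarith)
    have := (key x hx).2
    rw [abs_of_nonpos (by linarith)] at this
    linarith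


private lemma reim (a b : ℝ) (z : ℂ)
    (heq : -z^3 + (a:ℂ)*z^2 + (b:ℂ)*z + 2 = 0) :
    -(z.re^3 - 3*z.re*z.im^2) + a*(z.re^2 - z.im^2) + b*z.re + 2 = 0 ∧
    z.im*(-3*z.re^2 + z.im^2 + 2*a*z.re + b) = 0 := by
  have h1 := congrArg Complex.re heq
  have h2 := congrArg Complex.im heq
  simp [pow_succ, Complex.mul_re, Complex.mul_im] at h1 h2
  constructor
  · linear_combination h1
  · linear_combination h2

private lemma disk (z : ℂ) (h : ‖z‖ ≤ 1) : z.re^2 + z.im^2 ≤ 1 := by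
  have := Complex.sq_norm z
  rw [Complex.normSq_apply] at this
  nlinarith [norm_nonneg z]

private lemma core (a b x y : ℝ)
    (hre : -(x^3 - 3*x*y^2) + a*(x^2 - y^2) + b*x + 2 = 0)
    (him : y*(-3*x^2 + y^2 + 2*a*x + b) = 0) (hd : x^2 + y^2 ≤ 1)
    (h7 : (a = 0 ∧ b = 0) ∨ (a = -1 ∧ b = 1) ∨ (a = 1 ∧ b = -1) ∨ (a = 0 ∧ b = 1) ∨
      (a = 2 ∧ b = -2) ∨ (a = 1 ∧ b = 0) ∨ (a = 0 ∧ b = 2)) : False := by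
  rcases h7 with ⟨ha,hb⟩|⟨ha,hb⟩|⟨ha,hb⟩|⟨ha,hb⟩|⟨ha,hb⟩|⟨ha,hb⟩|⟨ha,hb⟩ <;>
    subst ha hb <;>
    rcases mul_eq_zero.mp him with hy | h2 <;>
    first
      | (subst hy; nlinarith [sq_nonneg x, sq_nonneg (x-1), sq_nonneg (x+1)])
      | nlinarith [sq_nonneg y, sq_nonneg x, sq_nonneg (x+1), sq_nonneg (x-1), sq_nonneg (x*y), hd, h2, sq_nonneg (x+y), sq_nonneg (x-y)]

/-- The integer pairs `(a,b)` such that every complex root of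
`-λ³ + aλ² + bλ + 2` has modulus `> 1` are exactly the seven listed pairs. -/
theorem stmt3 :
    {p : ℤ × ℤ | ∀ z : ℂ,
        -z ^ 3 + (p.1 : ℂ) * z ^ 2 + (p.2 : ℂ) * z + 2 = 0 → 1 < ‖z‖} =
      {((0 : ℤ), (0 : ℤ)), (-1, 1), (1, -1), (0, 1), (2, -2), (1, 0), (0, 2)} := by
  ext p
  obtain ⟨a, b⟩ := p
  simp only [Set.mem_setOf_eq, Set.mem_insert_iff, Set.mem_singleton_iff, Prod.mk.injEq]
  constructor
  · intro h
    obtain ⟨c1, c2, c3, c4⟩ := forward a b h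
    omega
  · intro h7 z hz
    by_contra hle
    push_neg at hle
    have hz' : -z^3 + ((a:ℝ):ℂ)*z^2 + ((b:ℝ):ℂ)*z + 2 = 0 := by push_cast; exact hz
    obtain ⟨hre, him⟩ := reim (a:ℝ) (b:ℝ) z hz'
    have hd := disk z hle
    have h7R : ((a:ℝ) = 0 ∧ (b:ℝ) = 0) ∨ ((a:ℝ) = -1 ∧ (b:ℝ) = 1) ∨ ((a:ℝ) = 1 ∧ (b:ℝ) = -1) ∨
        ((a:ℝ) = 0 ∧ (b:ℝ) = 1) ∨ ((a:ℝ) = 2 ∧ (b:ℝ) = -2) ∨ ((a:ℝ) = 1 ∧ (b:ℝ) = 0) ∨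
        ((a:ℝ) = 0 ∧ (b:ℝ) = 2) := by exact_mod_cast h7
    exact core (a:ℝ) (b:ℝ) z.re z.im hre him hd h7R
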